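/- For any n ∈ ℕ, p ∈ (0,1] with pn ∈ ℤ, k ≥ 1, and any function z : V_k → 2^{−k}ℤ assigning a value in 2^{−k}ℤ to every shifted sorted k-tuple over [n], there exists a function f : S(n,p) → ℤ of degree ≤ k such that D_P f = z(P) · Ψ_P for every shifted sorted k-tuple P. -/

import Mathlib

open Finset
open scoped Classical

/-- A point of the slice `S(n,p)`: a Boolean vector whose number of ones equals `p * n`. -/
abbrev SlicePoint (n : ℕ) (p : ℝ) : Type :=
  {x : Fin n → Bool // ((Finset.univ.filter (fun i => x i = true)).card : ℝ) = p * n}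

variable {n : ℕ} {p : ℝ}

/-- Expectation with respect to the uniform measure on the slice. -/
noncomputable def sExp (f : SlicePoint n p → ℝ) : ℝ :=
  (∑ x : SlicePoint n p, f x) / (Fintype.card (SlicePoint n p) : ℝ)

/-- The inner product `⟨f,g⟩ = E_x [f x * g x]` on functions on the slice. -/
noncomputable def sInner (f g : SlicePoint n p → ℝ) : ℝ :=
  sExp (fun x => f x * g x)

/-- `‖f‖₂² = E_x [f x ^ 2]`. -/
noncomputable def sNormSq (f : SlicePoint n p → ℝ) : ℝ := sInner f f

/-- `‖f‖₂`. -/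
noncomputable def sNorm (f : SlicePoint n p → ℝ) : ℝ := Real.sqrt (sNormSq f)

/-- The `i`-th coordinate of a slice point, viewed as a real number in `{0,1}`. -/
def coordR (x : SlicePoint n p) (i : Fin n) : ℝ := if x.1 i then 1 else 0

/-- `AND_T (x) = ∏_{i ∈ T} x_i`. -/
def andT (T : Finset (Fin n)) : SlicePoint n p → ℝ := fun x => ∏ i ∈ T, coordR x i

/-- The space `L_k` of functions of degree at most `k` on the slice. -/
def degLE (n : ℕ) (p : ℝ) (k : ℕ) : Submodule ℝ (SlicePoint n p → ℝ) :=
  Submodule.span ℝ {g | ∃ T : Finset (Fin n), T.card ≤ k ∧ g = andT T}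

/-- The space `L_{k-1}` (i.e. spanned by `AND_T` with `|T| < k`). -/
def degLT (n : ℕ) (p : ℝ) (k : ℕ) : Submodule ℝ (SlicePoint n p → ℝ) :=
  Submodule.span ℝ {g | ∃ T : Finset (Fin n), T.card < k ∧ g = andT T}

/-- `fk` is the orthogonal projection `f^{≤ k}` of `f` onto `L_k`. -/
def IsLowProj (n : ℕ) (p : ℝ) (k : ℕ) (f fk : SlicePoint n p → ℝ) : Prop :=
  fk ∈ degLE n p k ∧ ∀ g ∈ degLE n p k, sInner (f - fk) g = 0

/-- `fk` is the orthogonal projection of `f` onto the span of `AND_T`, `|T| < k`. -/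
def IsLowProjLT (n : ℕ) (p : ℝ) (k : ℕ) (f fk : SlicePoint n p → ℝ) : Prop :=
  fk ∈ degLT n p k ∧ ∀ g ∈ degLT n p k, sInner (f - fk) g = 0

/-- `Pr_x [f x ≠ g x]` under the uniform measure on the slice. -/
noncomputable def probNe (f g : SlicePoint n p → ℝ) : ℝ :=
  sExp (fun x => if f x = g x then 0 else 1)

/-- The action of a permutation on a slice point: `(x^π)_{π i} = x_i`. -/
def permPt (π : Equiv.Perm (Fin n)) (x : SlicePoint n p) : SlicePoint n p :=
  ⟨fun i => x.1 (π.symm i), by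
    have h : (Finset.univ.filter (fun i => x.1 (π.symm i) = true)) =
        (Finset.univ.filter (fun i => x.1 i = true)).map π.toEmbedding := by
      ext i
      simp [Finset.mem_map_equiv]
    rw [h, Finset.card_map]
    exact x.2⟩

/-- The derivative operator `D_{ij} f = (f - f^{(ij)})/2`. -/
noncomputable def Dij (i j : Fin n) (f : SlicePoint n p → ℝ) : SlicePoint n p → ℝ :=
  fun x => (f x - f (permPt (Equiv.swap i j) x)) / 2

/-- The derivative operator `D_P` associated with a set `P` of pairs,
obtained by composing the `D_{ab}` for `(a,b) ∈ P` (these commute for tuples). -/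
noncomputable def DP (P : Finset (Fin n × Fin n)) (f : SlicePoint n p → ℝ) :
    SlicePoint n p → ℝ :=
  P.toList.foldr (fun q g => Dij q.1 q.2 g) f

/-- `P` is a `k`-tuple: `k` pairs `(a,b)` with `a < b`, all `2k` entries distinct. -/
def IsTuple {n : ℕ} (k : ℕ) (P : Finset (Fin n × Fin n)) : Prop :=
  P.card = k ∧ (∀ q ∈ P, q.1 < q.2) ∧
    ∀ q ∈ P, ∀ r ∈ P, q ≠ r →
      q.1 ≠ r.1 ∧ q.1 ≠ r.2 ∧ q.2 ≠ r.1 ∧ q.2 ≠ r.2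

/-- `P` is shifted: for every pair `(a,b) ∈ P`, every `a' ≤ a` occurs as an entry of `P`. -/
def IsShifted {n : ℕ} (P : Finset (Fin n × Fin n)) : Prop :=
  ∀ q ∈ P, ∀ a : Fin n, a ≤ q.1 → ∃ r ∈ P, r.1 = a ∨ r.2 = a

/-- `P` is sorted: `a_i < a_j ↔ b_i < b_j`. -/
def IsSorted {n : ℕ} (P : Finset (Fin n × Fin n)) : Prop :=
  ∀ q ∈ P, ∀ r ∈ P, (q.1 < r.1 ↔ q.2 < r.2)

/-- `Ψ_P (x) = ∏_{(a,b) ∈ P} (x_b - x_a)`. -/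
def PsiP (P : Finset (Fin n × Fin n)) : SlicePoint n p → ℝ :=
  fun x => ∏ q ∈ P, (coordR x q.2 - coordR x q.1)

/-- The slice Laplacian `L f = f - (1 / C(n,2)) ∑_{i<j} f^{(ij)}`. -/
noncomputable def sliceLap (f : SlicePoint n p → ℝ) : SlicePoint n p → ℝ :=
  fun x => f x -
    (∑ q ∈ Finset.univ.filter (fun q : Fin n × Fin n => q.1 < q.2),
      f (permPt (Equiv.swap q.1 q.2) x)) / (n.choose 2 : ℝ)

/-- The noise operator `H_t = exp (-t L) = ∑_l (-t)^l L^l / l!`. -/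
noncomputable def Ht (t : ℝ) (f : SlicePoint n p → ℝ) : SlicePoint n p → ℝ :=
  fun x => ∑' l : ℕ, ((-t) ^ l / (l.factorial : ℝ)) * (sliceLap^[l] f) x

/-- The averaging operator `E_I f (x) = E_{Q ∼ S_I} [f (x^Q)]`, averaging over a uniformly
random permutation of the coordinates in `I` (fixing the coordinates outside `I`). -/
noncomputable def avgI (I : Finset (Fin n)) (f : SlicePoint n p → ℝ) : SlicePoint n p → ℝ :=
  fun x => (∑ σ : {σ : Equiv.Perm (Fin n) // ∀ i ∉ I, σ i = i}, f (permPt σ.1 x)) /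
    (Fintype.card {σ : Equiv.Perm (Fin n) // ∀ i ∉ I, σ i = i} : ℝ)

/-- The conditional variance `V_I (f) = ‖f - E_I f‖₂²`. -/
noncomputable def condVar (I : Finset (Fin n)) (f : SlicePoint n p → ℝ) : ℝ :=
  sNormSq (f - avgI I f)

/-- Expectation with respect to the uniform measure on the discrete cube. -/
noncomputable def cExp {n : ℕ} (f : (Fin n → Bool) → ℝ) : ℝ :=
  (∑ x : Fin n → Bool, f x) / (2 ^ n : ℝ)

/-- The Fourier–Walsh coefficient `f̂ (S) = E_x [f x * χ_S x]`. -/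
noncomputable def walshCoeff {n : ℕ} (f : (Fin n → Bool) → ℝ) (S : Finset (Fin n)) : ℝ :=
  cExp (fun x => f x * ∏ i ∈ S, (if x i then (-1 : ℝ) else 1))

/-- The Fourier weight of `f` beyond degree `k`: `W^{>k} (f) = ∑_{|S| > k} f̂(S)²`. -/
noncomputable def WAbove {n : ℕ} (k : ℕ) (f : (Fin n → Bool) → ℝ) : ℝ :=
  ∑ S ∈ Finset.univ.filter (fun S : Finset (Fin n) => k < S.card), walshCoeff f S ^ 2

/-- `Pr_x [f x ≠ g x]` under the uniform measure on the cube. -/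
noncomputable def cProbNe {n : ℕ} (f g : (Fin n → Bool) → ℝ) : ℝ :=
  cExp (fun x => if f x = g x then 0 else 1)

/-- The action of a permutation on a point of the cube: `(x^π)_{π i} = x_i`. -/
def cPerm {n : ℕ} (π : Equiv.Perm (Fin n)) (x : Fin n → Bool) : Fin n → Bool :=
  fun i => x (π.symm i)

/-- The derivative operator on the cube. -/
noncomputable def cDij {n : ℕ} (i j : Fin n) (f : (Fin n → Bool) → ℝ) :
    (Fin n → Bool) → ℝ :=
  fun x => (f x - f (cPerm (Equiv.swap i j) x)) / 2

section AttainAux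

variable {n : ℕ} {p : ℝ}

def adTops (P : Finset (Fin n × Fin n)) : Finset (Fin n) := P.image Prod.snd

def adBots (P : Finset (Fin n × Fin n)) : Finset (Fin n) := P.image Prod.fst

def adGood (P : Finset (Fin n × Fin n)) (S : Finset (Fin n)) : Prop :=
  ∀ q ∈ P, ((q.1 ∈ S) ↔ (q.2 ∉ S))

noncomputable def adSgn (P : Finset (Fin n × Fin n)) (S : Finset (Fin n)) : ℤ :=
  ∏ q ∈ P, (if q.2 ∈ S then 1 else -1)

noncomputable def adEps (P : Finset (Fin n × Fin n)) (S : Finset (Fin n)) : ℤ :=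
  if adGood P S then adSgn P S else 0

/-- the weight of a tuple: sum of the tops -/
def adW (P : Finset (Fin n × Fin n)) : ℕ := ∑ q ∈ P, (q.2 : ℕ)

noncomputable def adDL (L : List (Fin n × Fin n)) (f : SlicePoint n p → ℝ) :
    SlicePoint n p → ℝ :=
  L.foldr (fun q g => Dij q.1 q.2 g) f

lemma adDP_eq (P : Finset (Fin n × Fin n)) (f : SlicePoint n p → ℝ) :
    DP P f = adDL P.toList f := rfl

/- ### combinatorial lemmas -/

lemma adSnd_injOn {k : ℕ} {P : Finset (Fin n × Fin n)} (hPt : IsTuple k P) :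
    ∀ q ∈ P, ∀ r ∈ P, q.2 = r.2 → q = r := by
  intro q hq r hr h
  by_contra hne
  exact (hPt.2.2 q hq r hr hne).2.2.2 h

lemma adFst_injOn {k : ℕ} {P : Finset (Fin n × Fin n)} (hPt : IsTuple k P) :
    ∀ q ∈ P, ∀ r ∈ P, q.1 = r.1 → q = r := by
  intro q hq r hr h
  by_contra hne
  exact (hPt.2.2 q hq r hr hne).1 h

lemma ad_card_tops {k : ℕ} {P : Finset (Fin n × Fin n)} (hPt : IsTuple k P) :
    (adTops P).card = k := by
  rw [adTops, Finset.card_image_of_injOn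
    (fun q hq r hr h => adSnd_injOn hPt q (Finset.mem_coe.mp hq) r (Finset.mem_coe.mp hr) h)]
  exact hPt.1

lemma ad_card_bots {k : ℕ} {P : Finset (Fin n × Fin n)} (hPt : IsTuple k P) :
    (adBots P).card = k := by
  rw [adBots, Finset.card_image_of_injOn
    (fun q hq r hr h => adFst_injOn hPt q (Finset.mem_coe.mp hq) r (Finset.mem_coe.mp hr) h)]
  exact hPt.1

lemma ad_bots_not_tops {k : ℕ} {P : Finset (Fin n × Fin n)} (hPt : IsTuple k P)
    {e : Fin n} (he : e ∈ adBots P) : e ∉ adTops P := by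
  intro ht
  obtain ⟨q, hq, hq1⟩ := Finset.mem_image.mp he
  obtain ⟨r, hr, hr2⟩ := Finset.mem_image.mp ht
  rcases eq_or_ne q r with rfl | hne
  · exact absurd (hq1.trans hr2.symm) (ne_of_lt (hPt.2.1 q hq))
  · exact (hPt.2.2 q hq r hr hne).2.1 (hq1.trans hr2.symm)

lemma ad_good_self {k : ℕ} {P : Finset (Fin n × Fin n)} (hPt : IsTuple k P) :
    adGood P (adTops P) := by
  intro q hq
  have h2 : q.2 ∈ adTops P := Finset.mem_image_of_mem Prod.snd hq
  have h1 : q.1 ∉ adTops P := ad_bots_not_tops hPt (Finset.mem_image_of_mem Prod.fst hq)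
  simp [h1, h2]

lemma ad_sgn_self {k : ℕ} {P : Finset (Fin n × Fin n)} (hPt : IsTuple k P) :
    adSgn P (adTops P) = 1 :=
  Finset.prod_eq_one fun q hq => if_pos (Finset.mem_image_of_mem Prod.snd hq)

/-- characterization of the bottoms in terms of the tops -/
lemma ad_bots_char {k : ℕ} {P : Finset (Fin n × Fin n)} (hPt : IsTuple k P)
    (hPs : IsShifted P) (e : Fin n) :
    e ∈ adBots P ↔ (e ∉ adTops P ∧
      ((Finset.univ.filter (fun e' : Fin n => e' < e ∧ e' ∉ adTops P)).card < k)) := by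
  constructor
  · intro he
    obtain ⟨q, hq, hq1⟩ := Finset.mem_image.mp he
    refine ⟨ad_bots_not_tops hPt he, ?_⟩
    have hkpos : 0 < k := by
      rw [← ad_card_bots hPt]
      exact Finset.card_pos.mpr ⟨e, he⟩
    have hsub : (Finset.univ.filter (fun e' : Fin n => e' < e ∧ e' ∉ adTops P))
        ⊆ (adBots P).erase e := by
      intro e' he'
      simp only [Finset.mem_filter] at he'
      obtain ⟨-, hlt, hnt⟩ := he'
      have hle : e' ≤ q.1 := hq1 ▸ le_of_lt hlt
      obtain ⟨r, hr, hcase⟩ := hPs q hq e' hle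
      rcases hcase with h1 | h2
      · exact Finset.mem_erase.mpr ⟨ne_of_lt hlt, Finset.mem_image.mpr ⟨r, hr, h1⟩⟩
      · exact absurd (Finset.mem_image.mpr ⟨r, hr, h2⟩) hnt
    have hc1 := Finset.card_le_card hsub
    have hc2 : ((adBots P).erase e).card = k - 1 := by
      rw [Finset.card_erase_of_mem he, ad_card_bots hPt]
    omega
  · rintro ⟨hnt, hcard⟩
    by_contra hnb
    have hall : ∀ q ∈ P, q.1 < e := by
      intro q hq
      by_contra hge
      push_neg at hge
      obtain ⟨r, hr, hc⟩ := hPs q hq e hge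
      rcases hc with h1 | h2
      · exact hnb (Finset.mem_image.mpr ⟨r, hr, h1⟩)
      · exact hnt (Finset.mem_image.mpr ⟨r, hr, h2⟩)
    have hsub : adBots P ⊆ Finset.univ.filter (fun e' : Fin n => e' < e ∧ e' ∉ adTops P) := by
      intro a ha
      obtain ⟨q, hq, rfl⟩ := Finset.mem_image.mp ha
      exact Finset.mem_filter.mpr ⟨Finset.mem_univ _, hall q hq, ad_bots_not_tops hPt ha⟩
    have := Finset.card_le_card hsub
    rw [ad_card_bots hPt] at this
    omega

lemma ad_rank_eq {k : ℕ} {P : Finset (Fin n × Fin n)} (hPt : IsTuple k P)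
    (hPo : IsSorted P) {q : Fin n × Fin n} (hq : q ∈ P) :
    ((adBots P).filter (fun e => e < q.1)).card
      = ((adTops P).filter (fun e => e < q.2)).card := by
  have h1 : (adBots P).filter (fun e => e < q.1)
      = (P.filter (fun r => r.1 < q.1)).image Prod.fst := by
    ext e
    simp only [adBots, Finset.mem_filter, Finset.mem_image]
    constructor
    · rintro ⟨⟨r, hr, rfl⟩, hlt⟩; exact ⟨r, ⟨hr, hlt⟩, rfl⟩
    · rintro ⟨r, ⟨hr, hlt⟩, rfl⟩; exact ⟨⟨r, hr, rfl⟩, hlt⟩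
  have h2 : (adTops P).filter (fun e => e < q.2)
      = (P.filter (fun r => r.2 < q.2)).image Prod.snd := by
    ext e
    simp only [adTops, Finset.mem_filter, Finset.mem_image]
    constructor
    · rintro ⟨⟨r, hr, rfl⟩, hlt⟩; exact ⟨r, ⟨hr, hlt⟩, rfl⟩
    · rintro ⟨r, ⟨hr, hlt⟩, rfl⟩; exact ⟨⟨r, hr, rfl⟩, hlt⟩
  have h3 : P.filter (fun r => r.1 < q.1) = P.filter (fun r => r.2 < q.2) :=
    Finset.filter_congr fun r hr => by
      constructor
      · intro h; exact (hPo r hr q hq).mp h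
      · intro h; exact (hPo r hr q hq).mpr h
  rw [h1, h2, h3]
  rw [Finset.card_image_of_injOn (fun a ha b hb hab => adFst_injOn hPt a
      (Finset.filter_subset _ _ (Finset.mem_coe.mp ha)) b
      (Finset.filter_subset _ _ (Finset.mem_coe.mp hb)) hab),
    Finset.card_image_of_injOn (fun a ha b hb hab => adSnd_injOn hPt a
      (Finset.filter_subset _ _ (Finset.mem_coe.mp ha)) b
      (Finset.filter_subset _ _ (Finset.mem_coe.mp hb)) hab)]

lemma ad_unique_rank {T : Finset (Fin n)} {b₁ b₂ : Fin n} (h₁ : b₁ ∈ T) (h₂ : b₂ ∈ T)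
    (h : (T.filter (fun e => e < b₁)).card = (T.filter (fun e => e < b₂)).card) :
    b₁ = b₂ := by
  have key : ∀ c₁ c₂ : Fin n, c₁ ∈ T → c₁ < c₂ →
      (T.filter (fun e => e < c₁)).card < (T.filter (fun e => e < c₂)).card := by
    intro c₁ c₂ hc₁ hlt
    apply Finset.card_lt_card
    have hsub : T.filter (fun e => e < c₁) ⊆ T.filter (fun e => e < c₂) := by
      intro e he
      rw [Finset.mem_filter] at he ⊢
      exact ⟨he.1, lt_trans he.2 hlt⟩
    rw [Finset.ssubset_iff_of_subset hsub]
    exact ⟨c₁, Finset.mem_filter.mpr ⟨hc₁, hlt⟩,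
      fun hc => absurd (Finset.mem_filter.mp hc).2 (lt_irrefl c₁)⟩
  rcases lt_trichotomy b₁ b₂ with hlt | heq | hlt
  · exact absurd h (ne_of_lt (key b₁ b₂ h₁ hlt))
  · exact heq
  · exact absurd h.symm (ne_of_lt (key b₂ b₁ h₂ hlt))

/-- a shifted sorted tuple is determined by its tops -/
lemma ad_tops_inj {k : ℕ} {P Q : Finset (Fin n × Fin n)}
    (hPt : IsTuple k P) (hPs : IsShifted P) (hPo : IsSorted P)
    (hQt : IsTuple k Q) (hQs : IsShifted Q) (hQo : IsSorted Q)
    (h : adTops P = adTops Q) : P = Q := by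
  have hb : adBots P = adBots Q := by
    ext e
    rw [ad_bots_char hPt hPs e, ad_bots_char hQt hQs e, h]
  have hsub : P ⊆ Q := by
    intro q hq
    have hq1 : q.1 ∈ adBots Q := hb ▸ Finset.mem_image_of_mem Prod.fst hq
    obtain ⟨q', hq', hq'1⟩ := Finset.mem_image.mp hq1
    have r1 := ad_rank_eq hPt hPo hq
    have r2 := ad_rank_eq hQt hQo hq'
    rw [hq'1, ← hb, ← h] at r2
    have h22 : q.2 = q'.2 := by
      have hmem1 : q.2 ∈ adTops P := Finset.mem_image_of_mem Prod.snd hq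
      have hmem2 : q'.2 ∈ adTops P := by
        rw [h]; exact Finset.mem_image_of_mem Prod.snd hq'
      exact ad_unique_rank hmem1 hmem2 (r1.symm.trans r2)
    have hqq : q = q' := Prod.ext hq'1.symm h22
    rw [hqq]
    exact hq'
  exact Finset.eq_of_subset_of_card_le hsub (by rw [hPt.1, hQt.1])

lemma ad_pick_injOn {k : ℕ} {P : Finset (Fin n × Fin n)} (hPt : IsTuple k P)
    (S : Finset (Fin n)) :
    ∀ q ∈ P, ∀ r ∈ P,
      (if q.2 ∈ S then q.2 else q.1) = (if r.2 ∈ S then r.2 else r.1) → q = r := by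
  intro q hq r hr hqr
  by_contra hne
  have h4 := hPt.2.2 q hq r hr hne
  split_ifs at hqr
  · exact h4.2.2.2 hqr
  · exact h4.2.2.1 hqr
  · exact h4.2.1 hqr
  · exact h4.1 hqr

lemma ad_pick_image {k : ℕ} {P Q : Finset (Fin n × Fin n)}
    (hPt : IsTuple k P) (hQt : IsTuple k Q) (hgood : adGood P (adTops Q)) :
    P.image (fun q => if q.2 ∈ adTops Q then q.2 else q.1) = adTops Q := by
  apply Finset.eq_of_subset_of_card_le
  · intro i hi
    obtain ⟨q, hq, rfl⟩ := Finset.mem_image.mp hi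
    by_cases h2 : q.2 ∈ adTops Q
    · rwa [if_pos h2]
    · rw [if_neg h2]
      exact (hgood q hq).mpr h2
  · rw [Finset.card_image_of_injOn (fun q hq r hr h => ad_pick_injOn hPt (adTops Q) q
      (Finset.mem_coe.mp hq) r (Finset.mem_coe.mp hr) h), hPt.1, ad_card_tops hQt]

lemma ad_pick_surj {k : ℕ} {P Q : Finset (Fin n × Fin n)}
    (hPt : IsTuple k P) (hQt : IsTuple k Q) (hgood : adGood P (adTops Q)) :
    ∀ i ∈ adTops Q, ∃ q ∈ P, i = q.1 ∨ i = q.2 := by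
  intro i hi
  rw [← ad_pick_image hPt hQt hgood] at hi
  obtain ⟨q, hq, hqi⟩ := Finset.mem_image.mp hi
  refine ⟨q, hq, ?_⟩
  by_cases h2 : q.2 ∈ adTops Q
  · right; rw [← hqi, if_pos h2]
  · left; rw [← hqi, if_neg h2]

/-- triangularity: a transversal from a different tuple has smaller weight -/
lemma ad_W_lt {k : ℕ} {P Q : Finset (Fin n × Fin n)}
    (hPt : IsTuple k P) (hPs : IsShifted P) (hPo : IsSorted P)
    (hQt : IsTuple k Q) (hQs : IsShifted Q) (hQo : IsSorted Q)
    (hne : P ≠ Q) (hgood : adGood P (adTops Q)) : adW Q < adW P := by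
  have hWQ : adW Q = ∑ q ∈ P, ((if q.2 ∈ adTops Q then q.2 else q.1 : Fin n) : ℕ) := by
    have hs1 : ∑ x ∈ P.image (fun q => (if q.2 ∈ adTops Q then q.2 else q.1 : Fin n)), (x : ℕ)
        = ∑ q ∈ P, ((if q.2 ∈ adTops Q then q.2 else q.1 : Fin n) : ℕ) :=
      Finset.sum_image (ad_pick_injOn hPt (adTops Q))
    rw [ad_pick_image hPt hQt hgood] at hs1
    have hs2 : adW Q = ∑ x ∈ adTops Q, (x : ℕ) :=
      (Finset.sum_image (adSnd_injOn hQt)).symm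
    exact hs2.trans hs1
  have hle : ∀ q ∈ P, ((if q.2 ∈ adTops Q then q.2 else q.1 : Fin n) : ℕ) ≤ (q.2 : ℕ) := by
    intro q hq
    split_ifs
    · exact le_rfl
    · exact le_of_lt (hPt.2.1 q hq)
  have hex : ∃ q ∈ P, ((if q.2 ∈ adTops Q then q.2 else q.1 : Fin n) : ℕ) < (q.2 : ℕ) := by
    by_contra hno
    push_neg at hno
    have hall : ∀ q ∈ P, q.2 ∈ adTops Q := by
      intro q hq
      by_contra h2
      have h := hno q hq
      rw [if_neg h2] at h
      have hlt := hPt.2.1 q hq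
      rw [Fin.lt_def] at hlt
      omega
    have htsub : adTops P ⊆ adTops Q := by
      intro i hi
      obtain ⟨q, hq, rfl⟩ := Finset.mem_image.mp hi
      exact hall q hq
    have heq : adTops P = adTops Q := Finset.eq_of_subset_of_card_le htsub
      (by rw [ad_card_tops hPt, ad_card_tops hQt])
    exact hne (ad_tops_inj hPt hPs hPo hQt hQs hQo heq)
  rw [hWQ, adW]
  exact Finset.sum_lt_sum hle hex

lemma adEps_pos {P : Finset (Fin n × Fin n)} {S : Finset (Fin n)} (h : adGood P S) :
    adEps P S = adSgn P S := if_pos h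

lemma adEps_neg {P : Finset (Fin n × Fin n)} {S : Finset (Fin n)} (h : ¬ adGood P S) :
    adEps P S = 0 := if_neg h

lemma ad_exists_m {α : Type*} [DecidableEq α] (V : Finset α) (ε : α → α → ℤ)
    (W : α → ℕ) (w : α → ℤ)
    (hdiag : ∀ P ∈ V, ε P P = 1)
    (htri : ∀ P ∈ V, ∀ Q ∈ V, Q ≠ P → ε P Q ≠ 0 → W Q < W P) :
    ∃ m : α → ℤ, ∀ P ∈ V, ∑ Q ∈ V, ε P Q * m Q = w P := by
  suffices h : ∀ N : ℕ, ∃ m : α → ℤ, ∀ P ∈ V, W P < N → ∑ Q ∈ V, ε P Q * m Q = w P by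
    obtain ⟨m, hm⟩ := h (V.sup W + 1)
    exact ⟨m, fun P hP => hm P hP (Nat.lt_succ_of_le (Finset.le_sup hP))⟩
  intro N
  induction N with
  | zero => exact ⟨fun _ => 0, fun P _ h => absurd h (Nat.not_lt_zero _)⟩
  | succ N ih =>
    obtain ⟨m, hm⟩ := ih
    refine ⟨fun Q => if Q ∈ V ∧ W Q = N then w Q - ∑ R ∈ V.erase Q, ε Q R * m R else m Q, ?_⟩
    intro P hP hPN
    have key : ∀ Q ∈ V.erase P, ε P Q *
        (if Q ∈ V ∧ W Q = N then w Q - ∑ R ∈ V.erase Q, ε Q R * m R else m Q)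
        = ε P Q * m Q := by
      intro Q hQ
      rcases eq_or_ne (ε P Q) 0 with h0 | h0
      · rw [h0, zero_mul, zero_mul]
      · have hQV := Finset.mem_of_mem_erase hQ
        have hQne := Finset.ne_of_mem_erase hQ
        have hWQ : W Q < W P := htri P hP Q hQV hQne h0
        rw [if_neg (by rintro ⟨-, hN⟩; omega)]
    rw [← Finset.add_sum_erase V _ hP, Finset.sum_congr rfl key]
    beta_reduce
    by_cases hWP : W P = N
    · rw [if_pos ⟨hP, hWP⟩, hdiag P hP, one_mul]
      ring
    · have hlt : W P < N := by omega
      rw [if_neg (by rintro ⟨-, hN⟩; exact hWP hN)]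
      rw [Finset.add_sum_erase V (fun Q => ε P Q * m Q) hP]
      exact hm P hP hlt

/- ### analytic lemmas -/

lemma ad_coordR_permPt (π : Equiv.Perm (Fin n)) (x : SlicePoint n p) (i : Fin n) :
    coordR (permPt π x) i = coordR x (π.symm i) := rfl

lemma ad_andT_permPt (π : Equiv.Perm (Fin n)) (S : Finset (Fin n)) (x : SlicePoint n p) :
    andT S (permPt π x) = andT (S.image (fun i => π.symm i)) x := by
  show (∏ i ∈ S, coordR (permPt π x) i) = ∏ i ∈ S.image (fun i => π.symm i), coordR x i
  rw [Finset.prod_image (fun a _ b _ h => π.symm.injective h)]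
  rfl

lemma ad_mem_image_swap (a b j : Fin n) (S : Finset (Fin n)) :
    j ∈ S.image (fun i => Equiv.swap a b i) ↔ Equiv.swap a b j ∈ S := by
  constructor
  · intro h
    obtain ⟨i, hi, rfl⟩ := Finset.mem_image.mp h
    simpa [Equiv.swap_apply_self] using hi
  · intro h
    exact Finset.mem_image.mpr ⟨Equiv.swap a b j, h, Equiv.swap_apply_self a b j⟩

lemma ad_image_swap_both {a b : Fin n} {S : Finset (Fin n)} (ha : a ∈ S) (hb : b ∈ S) :
    S.image (fun i => Equiv.swap a b i) = S := by
  ext j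
  rw [ad_mem_image_swap]
  rcases eq_or_ne j a with rfl | hja
  · simp [Equiv.swap_apply_left, ha, hb]
  · rcases eq_or_ne j b with rfl | hjb
    · simp [Equiv.swap_apply_right, ha, hb]
    · rw [Equiv.swap_apply_of_ne_of_ne hja hjb]

lemma ad_image_swap_none {a b : Fin n} {S : Finset (Fin n)} (ha : a ∉ S) (hb : b ∉ S) :
    S.image (fun i => Equiv.swap a b i) = S := by
  ext j
  rw [ad_mem_image_swap]
  rcases eq_or_ne j a with rfl | hja
  · simp [Equiv.swap_apply_left, ha, hb]
  · rcases eq_or_ne j b with rfl | hjb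
    · simp [Equiv.swap_apply_right, ha, hb]
    · rw [Equiv.swap_apply_of_ne_of_ne hja hjb]

lemma ad_image_swap_one {a b : Fin n} {S : Finset (Fin n)} (ha : a ∉ S) (hb : b ∈ S) :
    S.image (fun i => Equiv.swap a b i) = insert a (S.erase b) := by
  have hab : a ≠ b := fun h => ha (h ▸ hb)
  ext j
  rw [ad_mem_image_swap, Finset.mem_insert, Finset.mem_erase]
  rcases eq_or_ne j a with rfl | hja
  · simp [Equiv.swap_apply_left, hb]
  · rcases eq_or_ne j b with rfl | hjb
    · simp [Equiv.swap_apply_right, ha, hab.symm]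
    · rw [Equiv.swap_apply_of_ne_of_ne hja hjb]
      simp [hja, hjb]

lemma adDL_nil (f : SlicePoint n p → ℝ) : adDL [] f = f := rfl

lemma adDL_cons (q : Fin n × Fin n) (L : List (Fin n × Fin n)) (f : SlicePoint n p → ℝ) :
    adDL (q :: L) f = Dij q.1 q.2 (adDL L f) := rfl

/-- linearity of the derivative over sums -/
lemma adDL_sum {α : Type*} (s : Finset α) (c : α → ℝ) (g : α → SlicePoint n p → ℝ)
    (L : List (Fin n × Fin n)) :
    adDL L (fun x => ∑ Q ∈ s, c Q * g Q x) = fun x => ∑ Q ∈ s, c Q * adDL L (g Q) x := by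
  induction L with
  | nil => rfl
  | cons q L ih =>
    rw [adDL_cons, ih]
    funext x
    show ((∑ Q ∈ s, c Q * adDL L (g Q) x)
      - (∑ Q ∈ s, c Q * adDL L (g Q) (permPt (Equiv.swap q.1 q.2) x))) / 2 = _
    rw [← Finset.sum_sub_distrib, Finset.sum_div]
    refine Finset.sum_congr rfl fun Q _ => ?_
    show (c Q * adDL L (g Q) x - c Q * adDL L (g Q) _) / 2
      = c Q * adDL (q :: L) (g Q) x
    rw [adDL_cons]
    show _ = c Q * ((adDL L (g Q) x - adDL L (g Q) (permPt (Equiv.swap q.1 q.2) x)) / 2)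
    ring

/-- the main computation: the derivative of an AND along a list of disjoint pairs -/
lemma adDL_andT (S : Finset (Fin n)) (L : List (Fin n × Fin n))
    (hd : ∀ q ∈ L, q.1 ≠ q.2)
    (hpw : L.Pairwise (fun q r => q.1 ≠ r.1 ∧ q.1 ≠ r.2 ∧ q.2 ≠ r.1 ∧ q.2 ≠ r.2)) :
    adDL L (andT S : SlicePoint n p → ℝ) = fun x =>
      (if ∀ q ∈ L, ((q.1 ∈ S) ↔ (q.2 ∉ S)) then
        (L.map (fun q => ((if q.2 ∈ S then (1:ℝ) else -1)
          * (coordR x q.2 - coordR x q.1)) / 2)).prod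
      else 0) * andT (S.filter (fun i => ∀ q ∈ L, i ≠ q.1 ∧ i ≠ q.2)) x := by
  induction L with
  | nil =>
    funext x
    rw [adDL_nil, if_pos (fun q hq => absurd hq List.not_mem_nil), List.map_nil,
      List.prod_nil, one_mul, Finset.filter_true_of_mem
        (fun i _ => fun q hq => absurd hq List.not_mem_nil)]
  | cons q L ih =>
    have hd' : ∀ r ∈ L, r.1 ≠ r.2 := fun r hr => hd r (List.mem_cons_of_mem _ hr)
    have hpw' := (List.pairwise_cons.mp hpw).2
    have hql : ∀ r ∈ L, q.1 ≠ r.1 ∧ q.1 ≠ r.2 ∧ q.2 ≠ r.1 ∧ q.2 ≠ r.2 :=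
      (List.pairwise_cons.mp hpw).1
    have hqd : q.1 ≠ q.2 := hd q List.mem_cons_self
    rw [adDL_cons, ih hd' hpw']
    funext x
    set S' := S.filter (fun i => ∀ r ∈ L, i ≠ r.1 ∧ i ≠ r.2) with hS'
    have haS' : q.1 ∈ S' ↔ q.1 ∈ S := by
      simp only [hS', Finset.mem_filter]
      exact ⟨fun h => h.1, fun h => ⟨h, fun r hr => ⟨(hql r hr).1, (hql r hr).2.1⟩⟩⟩
    have hbS' : q.2 ∈ S' ↔ q.2 ∈ S := by
      simp only [hS', Finset.mem_filter]
      exact ⟨fun h => h.1, fun h => ⟨h, fun r hr => ⟨(hql r hr).2.2.1, (hql r hr).2.2.2⟩⟩⟩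
    show ((if ∀ r ∈ L, ((r.1 ∈ S) ↔ (r.2 ∉ S)) then
        (L.map (fun r => ((if r.2 ∈ S then (1:ℝ) else -1)
          * (coordR x r.2 - coordR x r.1)) / 2)).prod else 0) * andT S' x
      - (if ∀ r ∈ L, ((r.1 ∈ S) ↔ (r.2 ∉ S)) then
        (L.map (fun r => ((if r.2 ∈ S then (1:ℝ) else -1)
          * (coordR (permPt (Equiv.swap q.1 q.2) x) r.2
            - coordR (permPt (Equiv.swap q.1 q.2) x) r.1)) / 2)).prod else 0)
          * andT S' (permPt (Equiv.swap q.1 q.2) x)) / 2 = _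
    by_cases hcond : ∀ r ∈ L, ((r.1 ∈ S) ↔ (r.2 ∉ S))
    case neg =>
      rw [if_neg hcond, if_neg hcond, if_neg
        (fun h => hcond (fun r hr => h r (List.mem_cons_of_mem _ hr)))]
      simp
    case pos =>
      rw [if_pos hcond, if_pos hcond]
      have hC : (L.map (fun r => ((if r.2 ∈ S then (1:ℝ) else -1)
          * (coordR (permPt (Equiv.swap q.1 q.2) x) r.2
            - coordR (permPt (Equiv.swap q.1 q.2) x) r.1)) / 2)).prod
          = (L.map (fun r => ((if r.2 ∈ S then (1:ℝ) else -1)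
            * (coordR x r.2 - coordR x r.1)) / 2)).prod := by
        congr 1
        apply List.map_congr_left
        intro r hr
        have h1 : coordR (permPt (Equiv.swap q.1 q.2) x) r.1 = coordR x r.1 := by
          rw [ad_coordR_permPt, Equiv.symm_swap,
            Equiv.swap_apply_of_ne_of_ne ((hql r hr).1.symm) ((hql r hr).2.2.1.symm)]
        have h2 : coordR (permPt (Equiv.swap q.1 q.2) x) r.2 = coordR x r.2 := by
          rw [ad_coordR_permPt, Equiv.symm_swap,
            Equiv.swap_apply_of_ne_of_ne ((hql r hr).2.1.symm) ((hql r hr).2.2.2.symm)]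
        rw [h1, h2]
      rw [hC]
      have hswap : andT S' (permPt (Equiv.swap q.1 q.2) x)
          = andT (S'.image (fun i => Equiv.swap q.1 q.2 i)) x := by
        rw [ad_andT_permPt]
        simp only [Equiv.symm_swap]
      rw [hswap]
      set Pr := (L.map (fun r => ((if r.2 ∈ S then (1:ℝ) else -1)
        * (coordR x r.2 - coordR x r.1)) / 2)).prod with hPr
      by_cases ha : q.1 ∈ S <;> by_cases hb : q.2 ∈ S
      · -- both: zero
        rw [ad_image_swap_both (haS'.mpr ha) (hbS'.mpr hb), if_neg
          (fun h => by have := (h q List.mem_cons_self); simp [ha, hb] at this)]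
        simp
      · -- q.1 ∈ S, q.2 ∉ S
        have hbS'' : q.2 ∉ S' := fun h => hb (hbS'.mp h)
        rw [Equiv.swap_comm, ad_image_swap_one hbS'' (haS'.mpr ha)]
        have hcond' : ∀ r ∈ q :: L, ((r.1 ∈ S) ↔ (r.2 ∉ S)) := by
          intro r hr
          rcases List.mem_cons.mp hr with rfl | hr'
          · simp [ha, hb]
          · exact hcond r hr'
        rw [if_pos hcond']
        have hfilter : S.filter (fun i => ∀ r ∈ q :: L, i ≠ r.1 ∧ i ≠ r.2)
            = S'.erase q.1 := by
          ext i
          simp only [hS', Finset.mem_filter, Finset.mem_erase, List.forall_mem_cons]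
          constructor
          · rintro ⟨hiS, ⟨hi1, hi2⟩, hrest⟩
            exact ⟨hi1, hiS, hrest⟩
          · rintro ⟨hi1, hiS, hrest⟩
            exact ⟨hiS, ⟨hi1, fun h => hb (h ▸ hiS)⟩, hrest⟩
        rw [hfilter]
        have hA : andT S' x = coordR x q.1 * andT (S'.erase q.1) x :=
          (Finset.mul_prod_erase S' _ (haS'.mpr ha)).symm
        have hB : andT (insert q.2 (S'.erase q.1)) x = coordR x q.2 * andT (S'.erase q.1) x := by
          show (∏ i ∈ insert q.2 (S'.erase q.1), coordR x i) = _
          rw [Finset.prod_insert (fun h => hbS'' (Finset.mem_of_mem_erase h))]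
          rfl
        rw [hA, hB, List.map_cons, List.prod_cons, if_neg hb]
        ring
      · -- q.1 ∉ S, q.2 ∈ S
        have haS'' : q.1 ∉ S' := fun h => ha (haS'.mp h)
        rw [ad_image_swap_one haS'' (hbS'.mpr hb)]
        have hcond' : ∀ r ∈ q :: L, ((r.1 ∈ S) ↔ (r.2 ∉ S)) := by
          intro r hr
          rcases List.mem_cons.mp hr with rfl | hr'
          · simp [ha, hb]
          · exact hcond r hr'
        rw [if_pos hcond']
        have hfilter : S.filter (fun i => ∀ r ∈ q :: L, i ≠ r.1 ∧ i ≠ r.2)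
            = S'.erase q.2 := by
          ext i
          simp only [hS', Finset.mem_filter, Finset.mem_erase, List.forall_mem_cons]
          constructor
          · rintro ⟨hiS, ⟨hi1, hi2⟩, hrest⟩
            exact ⟨hi2, hiS, hrest⟩
          · rintro ⟨hi2, hiS, hrest⟩
            exact ⟨hiS, ⟨fun h => ha (h ▸ hiS), hi2⟩, hrest⟩
        rw [hfilter]
        have hA : andT S' x = coordR x q.2 * andT (S'.erase q.2) x :=
          (Finset.mul_prod_erase S' _ (hbS'.mpr hb)).symm
        have hB : andT (insert q.1 (S'.erase q.2)) x = coordR x q.1 * andT (S'.erase q.2) x := by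
          show (∏ i ∈ insert q.1 (S'.erase q.2), coordR x i) = _
          rw [Finset.prod_insert (fun h => haS'' (Finset.mem_of_mem_erase h))]
          rfl
        rw [hA, hB, List.map_cons, List.prod_cons, if_pos hb]
        ring
      · -- neither: zero
        rw [ad_image_swap_none (fun h => ha (haS'.mp h)) (fun h => hb (hbS'.mp h)), if_neg
          (fun h => by have := (h q List.mem_cons_self); simp [ha, hb] at this)]
        simp

/-- the derivative of `AND_{tops Q}` along a tuple `P` -/
lemma adDP_andT {k : ℕ} {P Q : Finset (Fin n × Fin n)}
    (hPt : IsTuple k P) (hQt : IsTuple k Q) :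
    DP P (andT (adTops Q) : SlicePoint n p → ℝ)
      = fun x => ((adEps P (adTops Q) : ℝ) / 2 ^ k) * PsiP P x := by
  have hd : ∀ q ∈ P.toList, q.1 ≠ q.2 :=
    fun q hq => ne_of_lt (hPt.2.1 q (Finset.mem_toList.mp hq))
  have hpw := (Finset.nodup_toList P).pairwise_of_forall_ne
    (fun q hq r hr hne => hPt.2.2 q (Finset.mem_toList.mp hq) r (Finset.mem_toList.mp hr) hne)
  rw [adDP_eq, adDL_andT _ _ hd hpw]
  funext x
  by_cases hgood : adGood P (adTops Q)
  case neg =>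
    rw [if_neg (fun h => hgood (fun q hq => h q (Finset.mem_toList.mpr hq))), adEps,
      if_neg hgood, zero_mul]
    norm_num
  case pos =>
    rw [if_pos (fun q hq => hgood q (Finset.mem_toList.mp hq))]
    have hfe : (adTops Q).filter (fun i => ∀ q ∈ P.toList, i ≠ q.1 ∧ i ≠ q.2) = ∅ := by
      rw [Finset.filter_eq_empty_iff]
      intro i hi hp
      obtain ⟨q, hq, hcase⟩ := ad_pick_surj hPt hQt hgood i hi
      have h2 := hp q (Finset.mem_toList.mpr hq)
      rcases hcase with h | h
      · exact h2.1 h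
      · exact h2.2 h
    rw [hfe]
    have h1 : andT (∅ : Finset (Fin n)) x = 1 := Finset.prod_empty
    rw [h1, mul_one, Finset.prod_map_toList]
    have hsplit : (∏ q ∈ P, (((if q.2 ∈ adTops Q then (1:ℝ) else -1)
        * (coordR x q.2 - coordR x q.1)) / 2))
        = (∏ q ∈ P, (if q.2 ∈ adTops Q then (1:ℝ) else -1))
          * (∏ q ∈ P, (coordR x q.2 - coordR x q.1)) * (2:ℝ)⁻¹ ^ k := by
      rw [← hPt.1]
      rw [← Finset.prod_const (b := (2:ℝ)⁻¹), ← Finset.prod_mul_distrib,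
        ← Finset.prod_mul_distrib]
      exact Finset.prod_congr rfl fun q _ => by ring
    rw [hsplit]
    have hcast : ((adEps P (adTops Q) : ℤ) : ℝ)
        = ∏ q ∈ P, (if q.2 ∈ adTops Q then (1:ℝ) else -1) := by
      rw [adEps, if_pos hgood, adSgn]
      push_cast
      exact Finset.prod_congr rfl fun q _ => by split_ifs <;> norm_num
    rw [hcast]
    show _ = (∏ q ∈ P, (if q.2 ∈ adTops Q then (1:ℝ) else -1)) / 2 ^ k
      * ∏ q ∈ P, (coordR x q.2 - coordR x q.1)
    rw [div_eq_mul_inv, ← inv_pow]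
    ring


end AttainAux

/-- For any assignment `z` of a value in `2^{-k} ℤ` to every shifted sorted `k`-tuple, there
is an integer-valued function `f` of degree `≤ k` on the slice with `D_P f = z(P) Ψ_P` for
every shifted sorted `k`-tuple `P`. -/
theorem attain_derivatives (n : ℕ) (p : ℝ) (hp : 0 < p) (hp1 : p ≤ 1)
    (hpn : ∃ m : ℤ, (m : ℝ) = p * n) (k : ℕ) (hk : 1 ≤ k)
    (z : Finset (Fin n × Fin n) → ℝ)
    (hz : ∀ P, IsTuple k P → IsShifted P → IsSorted P → ∃ m : ℤ, z P = (m : ℝ) / 2 ^ k) :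
    ∃ f : SlicePoint n p → ℝ,
      (∀ x, ∃ m : ℤ, f x = m) ∧ f ∈ degLE n p k ∧
      ∀ P : Finset (Fin n × Fin n), IsTuple k P → IsShifted P → IsSorted P →
        DP P f = fun x => z P * PsiP P x := by
  classical
  set Vk : Finset (Finset (Fin n × Fin n)) :=
    Finset.univ.filter (fun P => IsTuple k P ∧ IsShifted P ∧ IsSorted P) with hVk
  have hmemVk : ∀ {P : Finset (Fin n × Fin n)},
      P ∈ Vk ↔ (IsTuple k P ∧ IsShifted P ∧ IsSorted P) := by
    intro P
    simp [hVk]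
  set w : Finset (Fin n × Fin n) → ℤ := fun P =>
    if h : IsTuple k P ∧ IsShifted P ∧ IsSorted P then (hz P h.1 h.2.1 h.2.2).choose
    else 0 with hwdef
  have hwz : ∀ P, IsTuple k P → IsShifted P → IsSorted P → z P = (w P : ℝ) / 2 ^ k := by
    intro P h1 h2 h3
    rw [hwdef]
    simp only [dif_pos (⟨h1, h2, h3⟩ : IsTuple k P ∧ IsShifted P ∧ IsSorted P)]
    exact (hz P h1 h2 h3).choose_spec
  obtain ⟨m, hm⟩ := ad_exists_m Vk (fun P Q => adEps P (adTops Q)) adW w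
    (fun P hP => by
      obtain ⟨h1, h2, h3⟩ := hmemVk.mp hP
      exact (adEps_pos (ad_good_self h1)).trans (ad_sgn_self h1))
    (fun P hP Q hQ hne heps => by
      obtain ⟨hP1, hP2, hP3⟩ := hmemVk.mp hP
      obtain ⟨hQ1, hQ2, hQ3⟩ := hmemVk.mp hQ
      have hgood : adGood P (adTops Q) := by
        by_contra h
        exact heps (adEps_neg h)
      exact ad_W_lt hP1 hP2 hP3 hQ1 hQ2 hQ3 (Ne.symm hne) hgood)
  have hand : ∀ (S : Finset (Fin n)) (x : SlicePoint n p), ∃ j : ℤ, andT S x = (j : ℝ) := by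
    intro S x
    by_cases h : ∀ i ∈ S, x.1 i = true
    · refine ⟨1, ?_⟩
      show (∏ i ∈ S, coordR x i) = ((1 : ℤ) : ℝ)
      push_cast
      exact Finset.prod_eq_one fun i hi => by rw [coordR, if_pos (h i hi)]
    · push_neg at h
      obtain ⟨i, hi, hxi⟩ := h
      refine ⟨0, ?_⟩
      show (∏ i ∈ S, coordR x i) = ((0 : ℤ) : ℝ)
      push_cast
      exact Finset.prod_eq_zero hi (by rw [coordR, if_neg hxi])
  refine ⟨fun x => ∑ Q ∈ Vk, (m Q : ℝ) * andT (adTops Q) x, ?_, ?_, ?_⟩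
  · -- integer valued
    intro x
    refine ⟨∑ Q ∈ Vk, m Q * (hand (adTops Q) x).choose, ?_⟩
    push_cast
    exact Finset.sum_congr rfl fun Q _ =>
      congrArg (fun t => ((m Q : ℝ) * t : ℝ)) (hand (adTops Q) x).choose_spec
  · -- degree at most k
    have hfe : (fun x => ∑ Q ∈ Vk, (m Q : ℝ) * andT (adTops Q) x)
        = ∑ Q ∈ Vk, (m Q : ℝ) • (andT (adTops Q) : SlicePoint n p → ℝ) := by
      funext x
      rw [Finset.sum_apply]
      exact Finset.sum_congr rfl fun Q _ => rfl
    rw [hfe]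
    refine Submodule.sum_mem _ fun Q hQ => Submodule.smul_mem _ _ (Submodule.subset_span ?_)
    obtain ⟨hQ1, -, -⟩ := hmemVk.mp hQ
    exact ⟨adTops Q, le_of_eq (ad_card_tops hQ1), rfl⟩
  · -- derivatives
    intro P hP1 hP2 hP3
    have hPV : P ∈ Vk := hmemVk.mpr ⟨hP1, hP2, hP3⟩
    rw [adDP_eq, adDL_sum]
    funext x
    have hterm : ∀ Q ∈ Vk, (m Q : ℝ) * adDL P.toList (andT (adTops Q)) x
        = (m Q : ℝ) * ((adEps P (adTops Q) : ℝ) / 2 ^ k * PsiP P x) := by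
      intro Q hQ
      obtain ⟨hQ1, -, -⟩ := hmemVk.mp hQ
      rw [← adDP_eq, adDP_andT hP1 hQ1]
    rw [Finset.sum_congr rfl hterm]
    have hsum : ∑ Q ∈ Vk, (m Q : ℝ) * ((adEps P (adTops Q) : ℝ) / 2 ^ k * PsiP P x)
        = ((∑ Q ∈ Vk, adEps P (adTops Q) * m Q : ℤ) : ℝ) / 2 ^ k * PsiP P x := by
      push_cast
      rw [Finset.sum_div, Finset.sum_mul]
      exact Finset.sum_congr rfl fun Q _ => by ring
    rw [hsum, hm P hPV, ← hwz P hP1 hP2 hP3]
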